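/- Let i ≤ ℓ−1 be a non-critical index. For all V-selectors f and g: if f_{i+1}(v) = g_{i+1}(v) for every node v ∈ Θ_{i+1}, then f_i(v) = g_i(v) for every node v ∈ Θ_i. (This is the determination content of the claim that the selector view f_i is definable from f_{i+1} alone when i is non-critical.) -/

import Mathlib

universe u v

/-- A leaf of a graph: a node with at most one neighbour. -/
def IsTreeLeaf {𝒱 : Type v} (T : SimpleGraph 𝒱) (x : 𝒱) : Prop :=
  (T.neighborSet x).Subsingleton

/-- `(T, B)` is a tree decomposition of the graph with vertex set `V` and edge
relation `E`. -/
def IsTreeDecomp {V : Type u} {𝒱 : Type v} (E : V → V → Prop) (T : SimpleGraph 𝒱)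
    (B : 𝒱 → Finset V) : Prop :=
  T.IsTree ∧ (∀ s t : V, E s t → ∃ x : 𝒱, s ∈ B x ∧ t ∈ B x) ∧
    ∀ s : V, (T.induce {x : 𝒱 | s ∈ B x}).Connected

/-- A nice (rooted) tree decomposition: every leaf has a singleton bag, every vertex
is the bag of some leaf, and along every tree edge one bag is obtained from the other
by adding exactly one vertex. -/
def IsNiceTD {V : Type u} {𝒱 : Type v} [DecidableEq V] (E : V → V → Prop)
    (T : SimpleGraph 𝒱) (B : 𝒱 → Finset V) (root : 𝒱) : Prop :=
  IsTreeDecomp E T B ∧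
  (∀ x : 𝒱, IsTreeLeaf T x → ∃ s : V, B x = {s}) ∧
  (∀ s : V, ∃ x : 𝒱, IsTreeLeaf T x ∧ B x = {s}) ∧
  ∀ x y : 𝒱, T.Adj x y →
    (∃ s : V, s ∉ B x ∧ B y = insert s (B x)) ∨ (∃ s : V, s ∉ B y ∧ B x = insert s (B y))

/-- A depth-first traversal `vs 1, …, vs ℓ` of the rooted tree `T`: it starts and ends
at the root, consecutive nodes are adjacent, and every oriented edge of `T` occurs
exactly once among consecutive pairs. -/
structure IsDFT {𝒱 : Type v} (T : SimpleGraph 𝒱) (root : 𝒱) (ℓ : ℕ) (vs : ℕ → 𝒱) :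
    Prop where
  one_le : 1 ≤ ℓ
  first : vs 1 = root
  last : vs ℓ = root
  adj : ∀ j : ℕ, 1 ≤ j → j < ℓ → T.Adj (vs j) (vs (j + 1))
  once : ∀ a b : 𝒱, T.Adj a b → ∃! j : ℕ, 1 ≤ j ∧ j < ℓ ∧ vs j = a ∧ vs (j + 1) = b

/-- `x` is an ancestor of `y` (w.r.t. `root`): `x` lies on the path from the root
to `y`.  (In a tree the path between two nodes is unique.) -/
def Anc {𝒱 : Type v} (T : SimpleGraph 𝒱) (root x y : 𝒱) : Prop :=
  ∀ p : T.Walk root y, p.IsPath → x ∈ p.support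

/-- `Θ_i`: the set of ancestors of `vs i`. -/
def Theta {𝒱 : Type v} (T : SimpleGraph 𝒱) (root : 𝒱) (vs : ℕ → 𝒱) (i : ℕ) : Set 𝒱 :=
  {x | Anc T root x (vs i)}

/-- `Θ_{≤ i} = ⋃_{1 ≤ j ≤ i} Θ_j`. -/
def ThetaLe {𝒱 : Type v} (T : SimpleGraph 𝒱) (root : 𝒱) (vs : ℕ → 𝒱) (i : ℕ) : Set 𝒱 :=
  {x | ∃ j : ℕ, 1 ≤ j ∧ j ≤ i ∧ x ∈ Theta T root vs j}

/-- `Ψ_i = ⋃_{x ∈ Θ_i} B x`. -/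
def Psi {V : Type u} {𝒱 : Type v} (T : SimpleGraph 𝒱) (root : 𝒱) (vs : ℕ → 𝒱)
    (B : 𝒱 → Finset V) (i : ℕ) : Set V :=
  {s | ∃ x ∈ Theta T root vs i, s ∈ B x}

/-- `Ψ_{≤ i} = ⋃_{1 ≤ j ≤ i} Ψ_j`. -/
def PsiLe {V : Type u} {𝒱 : Type v} (T : SimpleGraph 𝒱) (root : 𝒱) (vs : ℕ → 𝒱)
    (B : 𝒱 → Finset V) (i : ℕ) : Set V :=
  {s | ∃ j : ℕ, 1 ≤ j ∧ j ≤ i ∧ s ∈ Psi T root vs B j}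

/-- `x = n_i(w)`: `x` is the lowest ancestor of `w` belonging to `Θ_{≤ i}`. -/
def LowestAnc {𝒱 : Type v} (T : SimpleGraph 𝒱) (root : 𝒱) (vs : ℕ → 𝒱) (i : ℕ)
    (w x : 𝒱) : Prop :=
  Anc T root x w ∧ x ∈ ThetaLe T root vs i ∧
    ∀ y : 𝒱, Anc T root y w → y ∈ ThetaLe T root vs i → Anc T root y x

/-- `r = r(s)`: the node of `𝒯^s = {x | s ∈ B x}` closest to the root. -/
def IsBagRoot {V : Type u} {𝒱 : Type v} (T : SimpleGraph 𝒱) (root : 𝒱)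
    (B : 𝒱 → Finset V) (s : V) (r : 𝒱) : Prop :=
  s ∈ B r ∧ ∀ x : 𝒱, s ∈ B x → Anc T root r x

/-- `Ψ_{> i-1}(x) = {s ∈ Ψ_{> i-1} | n_i(s) = x}`, where `n_i(s) = n_i(r(s))`. -/
def PsiGtAt {V : Type u} {𝒱 : Type v} (T : SimpleGraph 𝒱) (root : 𝒱) (vs : ℕ → 𝒱)
    (B : 𝒱 → Finset V) (i : ℕ) (x : 𝒱) : Set V :=
  {s | s ∉ PsiLe T root vs B (i - 1) ∧
    ∃ r : 𝒱, IsBagRoot T root B s r ∧ LowestAnc T root vs i r x}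

/-- Possible values of a selector view: `?`, `⊤`, `⊥`, or an exit pair `(t, m)`. -/
inductive View (V : Type u) : Type u where
  | unk : View V
  | top : View V
  | bot : View V
  | exit : V → ℕ → View V

/-- The trace of the (partial) selector `f` from `s`: `iter f s n` is the `n`-th
vertex of the trace, if the trace is still defined at step `n`. -/
def iter {V : Type u} (f : V → Option V) (s : V) : ℕ → Option V
  | 0 => some s
  | n + 1 => (iter f s n).bind f

/-- `t` occurs infinitely often on the trace of `f` from `s`. -/
def infOcc {V : Type u} (f : V → Option V) (s t : V) : Prop :=
  ∀ N : ℕ, ∃ n : ℕ, N ≤ n ∧ iter f s n = some t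

/-- A parity game together with a tree decomposition and a depth-first traversal:
edge relation `E`, number of colors `C`, coloring `c`, set `V0` of vertices of
player `P₀` (`V1 = V0ᶜ`), tree `T` with bags `B`, depth-first traversal
`vs 1, …, vs len` and distinguished initial vertex `sigma`. -/
structure Setting (V : Type u) (𝒱 : Type v) where
  E : V → V → Prop
  C : ℕ
  c : V → ℕ
  V0 : Set V
  T : SimpleGraph 𝒱
  vs : ℕ → 𝒱
  len : ℕ
  sigma : V
  B : 𝒱 → Finset V

namespace Setting

variable {V : Type u} {𝒱 : Type v} (S : Setting V 𝒱)

/-- The root of the tree is the first node of the depth-first traversal. -/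
def root : 𝒱 := S.vs 1

/-- Standing assumptions: colors lie in `{1, …, C}`, `(T, B)` is a nice tree
decomposition of `(V, E)` rooted at `v₁` with bag `{σ}`, and `vs` is a
depth-first traversal of `T` of length `len`. -/
def Standing [DecidableEq V] : Prop :=
  (∀ s : V, 1 ≤ S.c s ∧ S.c s ≤ S.C) ∧
  IsNiceTD S.E S.T S.B S.root ∧
  IsDFT S.T S.root S.len S.vs ∧
  S.B S.root = {S.sigma}

def theta (i : ℕ) : Set 𝒱 := Theta S.T S.root S.vs i

def psi (i : ℕ) : Set V := Psi S.T S.root S.vs S.B i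

def psiLe (i : ℕ) : Set V := PsiLe S.T S.root S.vs S.B i

def psiGtAt (i : ℕ) (x : 𝒱) : Set V := PsiGtAt S.T S.root S.vs S.B i x

/-- The index `i` is critical: `Ψ_{>i} ⊊ Ψ_{>i-1}`. -/
def Crit (i : ℕ) : Prop := (S.psiLe i)ᶜ ⊂ (S.psiLe (i - 1))ᶜ

/-- `f` is a `W`-selector: a partial map with domain contained in `W` that follows
edges of the game. -/
def Sel (W : Set V) (f : V → Option V) : Prop :=
  ∀ s t : V, f s = some t → s ∈ W ∧ S.E s t

/-- The (maximal) trace of the `V`-selector `f` from `s` is winning for player `P₀`: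
either it is finite and its last vertex belongs to `V1 = V0ᶜ`, or it is infinite and
the maximal color occurring infinitely often along it is even. -/
def TraceWin (f : V → Option V) (s : V) : Prop :=
  (∃ (n : ℕ) (t : V), iter f s n = some t ∧ f t = none ∧ t ∉ S.V0) ∨
  ((∀ n : ℕ, iter f s n ≠ none) ∧
    ∃ m : ℕ, Even m ∧ (∃ t : V, infOcc f s t ∧ S.c t = m) ∧
      ∀ t : V, infOcc f s t → S.c t ≤ m)

/-- The selector view `f_i(x, s)` of the `V`-selector `f`: `S.SelView f i x s w`
means `f_i(x, s) = w`. -/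
def SelView (f : V → Option V) (i : ℕ) (x : 𝒱) (s : V) : View V → Prop := fun w =>
  match w with
  | View.unk =>
      (f s = none ∧ s ∉ S.psiGtAt i x) ∨ (∃ t : V, f s = some t ∧ t ∉ S.psiGtAt i x)
  | View.top =>
      (f s ≠ none ∨ s ∈ S.psiGtAt i x) ∧
      (∀ (n : ℕ) (t : V), 1 ≤ n → iter f s n = some t → t ∈ S.psiGtAt i x) ∧
      S.TraceWin f s
  | View.bot =>
      (f s ≠ none ∨ s ∈ S.psiGtAt i x) ∧
      (∀ (n : ℕ) (t : V), 1 ≤ n → iter f s n = some t → t ∈ S.psiGtAt i x) ∧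
      ¬ S.TraceWin f s
  | View.exit t m =>
      ∃ j : ℕ, 2 ≤ j ∧ iter f s j = some t ∧ t ∉ S.psiGtAt i x ∧
        (∀ (n : ℕ) (u : V), 1 ≤ n → n < j → iter f s n = some u → u ∈ S.psiGtAt i x) ∧
        (∃ (n : ℕ) (u : V), n < j ∧ iter f s n = some u ∧ S.c u = m) ∧
        (∀ (n : ℕ) (u : V), n < j → iter f s n = some u → S.c u ≤ m)

/-- The selector views `f_i(x)` and `g_i(x)` coincide (as functions on the bag of `x`). -/
def ViewEq (f g : V → Option V) (i : ℕ) (x : 𝒱) : Prop :=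
  ∀ s ∈ S.B x, ∀ w : View V, S.SelView f i x s w ↔ S.SelView g i x s w

/-- `f` is a `V`-selector extending the `V₀`-selector `g` (i.e. `g` is the
restriction of `f` to `V0`). -/
def Ext (f g : V → Option V) : Prop :=
  S.Sel Set.univ f ∧ (∀ s ∈ S.V0, g s = f s) ∧ ∀ s ∉ S.V0, g s = none

/-- The selector view `f_i(x)` of a `V`-selector, as a relation on the bag of `x`. -/
def viewOn (f : V → Option V) (i : ℕ) (x : 𝒱) : V → View V → Prop :=
  fun s w => s ∈ S.B x ∧ S.SelView f i x s w

/-- `ω_i^g(x) = { f_i(x) | f is an extension of g }`. -/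
def omega (g : V → Option V) (i : ℕ) (x : 𝒱) : Set (V → View V → Prop) :=
  {R | ∃ f : V → Option V, S.Ext f g ∧ R = S.viewOn f i x}

/-- The accessibility set `α_i^g`: vertices of `Ψ_i` reachable from `σ` along the
trace of some extension of `g`. -/
def alpha (g : V → Option V) (i : ℕ) : Set V :=
  {s | s ∈ S.psi i ∧ ∃ f : V → Option V, S.Ext f g ∧ ∃ k : ℕ, iter f S.sigma k = some s}

/-- The set `B(g)_{x,y} ⊆ {⊥, ⊤}` (with `false` for `⊥` and `true` for `⊤`). -/
def Bsel (g : V → Option V) (x y : V) : Set Bool :=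
  {b | (b = false ∧ (¬ S.E x y ∨ (x ∈ S.V0 ∧ g x = none) ∨
          (∃ z : V, g x = some z ∧ z ≠ y) ∨ (S.E x y ∧ x ∉ S.V0))) ∨
       (b = true ∧ (g x = some y ∨ (S.E x y ∧ x ∉ S.V0)))}

end Setting

set_option linter.unusedSectionVars false
set_option linter.unusedVariables false
set_option maxHeartbeats 1000000

open SimpleGraph

section TreeAux

variable {𝒱 : Type v} [DecidableEq 𝒱] {T : SimpleGraph 𝒱} {root : 𝒱}

noncomputable def thePath (hT : T.IsTree) (root x : 𝒱) : T.Walk root x :=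
  (hT.existsUnique_path root x).choose

lemma thePath_isPath (hT : T.IsTree) (root x : 𝒱) : (thePath hT root x).IsPath :=
  (hT.existsUnique_path root x).choose_spec.1

lemma path_unique (hT : T.IsTree) {x : 𝒱} (p : T.Walk root x) (hp : p.IsPath) :
    p = thePath hT root x :=
  ((hT.existsUnique_path root x).choose_spec.2 p hp)

lemma anc_iff (hT : T.IsTree) {x y : 𝒱} :
    Anc T root x y ↔ x ∈ (thePath hT root y).support := by
  constructor
  · intro h; exact h _ (thePath_isPath hT root y)
  · intro h p hp; rwa [path_unique hT p hp]

lemma anc_refl (x : 𝒱) : Anc T root x x :=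
  fun p _ => p.end_mem_support

lemma anc_root (x : 𝒱) : Anc T root root x :=
  fun p _ => p.start_mem_support

lemma path_root_root (hT : T.IsTree) : thePath hT root root = SimpleGraph.Walk.nil :=
  (path_unique hT SimpleGraph.Walk.nil (by simp)).symm

lemma anc_to_root (hT : T.IsTree) {x : 𝒱} (h : Anc T root x root) : x = root := by
  rw [anc_iff hT, path_root_root hT] at h
  simpa using h

noncomputable def depth (hT : T.IsTree) (root x : 𝒱) : ℕ := (thePath hT root x).length

lemma takeUntil_eq_thePath (hT : T.IsTree) {x y : 𝒱}
    (hh : x ∈ (thePath hT root y).support) :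
    (thePath hT root y).takeUntil x hh = thePath hT root x :=
  path_unique hT _ ((thePath_isPath hT root y).takeUntil hh)

lemma anc_trans (hT : T.IsTree) {x y z : 𝒱} (hxy : Anc T root x y) (hyz : Anc T root y z) :
    Anc T root x z := by
  rw [anc_iff hT] at hyz ⊢
  have hx : x ∈ ((thePath hT root z).takeUntil y hyz).support := by
    rw [takeUntil_eq_thePath hT hyz]
    exact (anc_iff hT).1 hxy
  exact (thePath hT root z).support_takeUntil_subset hyz hx

lemma depth_lt (hT : T.IsTree) {x y : 𝒱} (hxy : Anc T root x y) (hne : x ≠ y) :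
    depth hT root x < depth hT root y := by
  have hm : x ∈ (thePath hT root y).support := (anc_iff hT).1 hxy
  have hsp := (thePath hT root y).take_spec hm
  have hlen := congrArg SimpleGraph.Walk.length hsp
  rw [SimpleGraph.Walk.length_append] at hlen
  have ht : (thePath hT root y).takeUntil x hm = thePath hT root x :=
    takeUntil_eq_thePath hT hm
  have hd : 0 < ((thePath hT root y).dropUntil x hm).length := by
    rcases Nat.eq_zero_or_pos ((thePath hT root y).dropUntil x hm).length with h0 | h
    · exact absurd (SimpleGraph.Walk.eq_of_length_eq_zero h0) hne
    · exact h
  unfold depth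
  rw [ht] at hlen
  omega

lemma anc_antisymm (hT : T.IsTree) {x y : 𝒱} (hxy : Anc T root x y) (hyx : Anc T root y x) :
    x = y := by
  by_contra hne
  have h1 := depth_lt hT hxy hne
  have h2 := depth_lt hT hyx (Ne.symm hne)
  omega

/-- If `x ~ y` and `x` is an ancestor of `y`, then the ancestors of `y` are those of
`x` together with `y` itself. -/
lemma anc_insert (hT : T.IsTree) {x y : 𝒱} (hadj : T.Adj x y) (hxy : Anc T root x y) :
    ∀ z, Anc T root z y ↔ (z = y ∨ Anc T root z x) := by
  have hxny : x ≠ y := hadj.ne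
  have hynotp : y ∉ (thePath hT root x).support := by
    intro hy
    exact hxny (anc_antisymm hT hxy ((anc_iff hT).2 hy))
  have hq : ((thePath hT root x).concat hadj).IsPath := by
    rw [SimpleGraph.Walk.isPath_def, SimpleGraph.Walk.support_concat]
    rw [List.nodup_append']
    refine ⟨(thePath_isPath hT root x).support_nodup, List.nodup_singleton y, ?_⟩
    intro a ha hb
    simp only [List.mem_singleton] at hb
    subst hb; exact hynotp ha
  have hqe : (thePath hT root x).concat hadj = thePath hT root y := path_unique hT _ hq
  intro z
  rw [anc_iff hT, ← hqe, SimpleGraph.Walk.support_concat,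
    List.mem_append, List.mem_singleton]
  rw [anc_iff hT]
  tauto

lemma adj_anc_or (hT : T.IsTree) {x y : 𝒱} (hadj : T.Adj x y) :
    Anc T root x y ∨ Anc T root y x := by
  by_cases hy : y ∈ (thePath hT root x).support
  · exact Or.inr ((anc_iff hT).2 hy)
  · left
    have hq : ((thePath hT root x).concat hadj).IsPath := by
      rw [SimpleGraph.Walk.isPath_def, SimpleGraph.Walk.support_concat]
      rw [List.nodup_append']
      refine ⟨(thePath_isPath hT root x).support_nodup, List.nodup_singleton y, ?_⟩
      intro a ha hb
      simp only [List.mem_singleton] at hb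
      subst hb; exact hy ha
    have hqe : (thePath hT root x).concat hadj = thePath hT root y := path_unique hT _ hq
    rw [anc_iff hT, ← hqe, SimpleGraph.Walk.support_concat]
    simp

lemma parent_unique (hT : T.IsTree) {p₁ p₂ z : 𝒱} (h1 : T.Adj p₁ z) (ha1 : Anc T root p₁ z)
    (h2 : T.Adj p₂ z) (ha2 : Anc T root p₂ z) : p₁ = p₂ := by
  have e1 := (anc_insert hT h1 ha1 p₂).1 ha2
  have e2 := (anc_insert hT h2 ha2 p₁).1 ha1
  rcases e1 with rfl | e1
  · exact absurd rfl h2.ne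
  rcases e2 with rfl | e2
  · exact absurd rfl h1.ne
  exact anc_antisymm hT e2 e1

/-- Two ancestors of a common vertex are comparable. -/
lemma anc_comparable (hT : T.IsTree) {x y z : 𝒱} (hx : Anc T root x z) (hy : Anc T root y z) :
    Anc T root x y ∨ Anc T root y x := by
  obtain ⟨n, hn⟩ : ∃ n, depth hT root z = n := ⟨_, rfl⟩
  induction n using Nat.strong_induction_on generalizing x y z with
  | _ n IH =>
    by_cases hzr : z = root
    · rw [hzr] at hx hy
      rw [anc_to_root hT hx, anc_to_root hT hy]
      exact Or.inl (anc_refl _)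
    · -- decompose the path to z from the back
      have hnn : (thePath hT root z).length ≠ 0 := by
        intro h0
        exact hzr (SimpleGraph.Walk.eq_of_length_eq_zero h0).symm
      -- use reverse-cons decomposition
      obtain ⟨w, hadj, hanc, hins, hdep⟩ :
          ∃ w, T.Adj w z ∧ Anc T root w z ∧
            (∀ u, Anc T root u z ↔ (u = z ∨ Anc T root u w)) ∧
            depth hT root w < depth hT root z := by
        obtain ⟨w, hwz, q, hq⟩ := SimpleGraph.Walk.exists_eq_cons_of_ne
          hzr ((thePath hT root z).reverse)
        -- (thePath z).reverse = cons hwz q, with hwz : T.Adj z w, q : Walk w root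
        have hp : thePath hT root z = q.reverse.concat hwz.symm := by
          have := congrArg SimpleGraph.Walk.reverse hq
          rw [SimpleGraph.Walk.reverse_reverse, SimpleGraph.Walk.reverse_cons] at this
          exact this
        have hanc : Anc T root w z := by
          rcases adj_anc_or hT hwz.symm with h | h
          · exact h
          · exfalso
            -- z anc of w: z ∈ thePath w; but w is penultimate of thePath z
            have hwm : w ∈ (thePath hT root z).support := by
              rw [hp, SimpleGraph.Walk.support_concat]
              simp [SimpleGraph.Walk.end_mem_support]
            have : Anc T root w z := (anc_iff hT).2 hwm
            exact hwz.ne (anc_antisymm hT h this)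
        refine ⟨w, hwz.symm, hanc, anc_insert hT hwz.symm hanc, depth_lt hT hanc hwz.ne.symm⟩
      rcases (hins x).1 hx with rfl | hx'
      · exact Or.inr hy
      rcases (hins y).1 hy with rfl | hy'
      · exact Or.inl hx
      exact IH (depth hT root w) (hn ▸ hdep) hx' hy' rfl

end TreeAux
section ConnAux

variable {𝒱 : Type v} [DecidableEq 𝒱] {T : SimpleGraph 𝒱} {root : 𝒱}

/-- Any path from `r` to `x` passes through every `m` with `Anc r m` and `Anc m x`. -/
lemma path_through (hT : T.IsTree) {r m x : 𝒱} (hrm : Anc T root r m) (hmx : Anc T root m x)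
    (q : T.Walk r x) (hq : q.IsPath) : m ∈ q.support := by
  have hrx : Anc T root r x := anc_trans hT hrm hmx
  have hr : r ∈ (thePath hT root x).support := (anc_iff hT).1 hrx
  have hm : m ∈ (thePath hT root x).support := (anc_iff hT).1 hmx
  set p := thePath hT root x with hp
  have hsplit := p.take_spec hr
  have hmem : m ∈ (p.takeUntil r hr).support ∨ m ∈ (p.dropUntil r hr).support := by
    rw [← SimpleGraph.Walk.mem_support_append_iff, hsplit]; exact hm
  have hmd : m ∈ (p.dropUntil r hr).support := by
    rcases hmem with hmt | hmd
    · have : Anc T root m r := by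
        rw [anc_iff hT, ← takeUntil_eq_thePath hT hr]; exact hmt
      have : m = r := anc_antisymm hT this hrm
      subst this
      exact (p.dropUntil m hr).start_mem_support
    · exact hmd
  -- q and dropUntil are both paths from r to x, hence equal
  have hdp : (p.dropUntil r hr).IsPath := (thePath_isPath hT root x).dropUntil hr
  obtain ⟨pu, -, huniq⟩ := hT.existsUnique_path r x
  rw [huniq q hq, ← huniq _ hdp]
  exact hmd

/-- From connectivity of an induced subgraph, get a path in `T` staying in the set. -/
lemma exists_path_in_set {Sset : Set 𝒱} (hconn : (T.induce Sset).Connected)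
    {r x : 𝒱} (hr : r ∈ Sset) (hx : x ∈ Sset) :
    ∃ q : T.Walk r x, q.IsPath ∧ ∀ y ∈ q.support, y ∈ Sset := by
  obtain ⟨W⟩ := hconn.preconnected ⟨r, hr⟩ ⟨x, hx⟩
  let W' : T.Walk r x := W.map (SimpleGraph.Embedding.induce Sset).toHom
  refine ⟨W'.bypass, W'.bypass_isPath, fun y hy => ?_⟩
  have hy' : y ∈ W'.support := W'.support_bypass_subset hy
  rw [show W'.support = _ from SimpleGraph.Walk.support_map _ _, List.mem_map] at hy'
  obtain ⟨⟨z, hz⟩, _, rfl⟩ := hy'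
  exact hz

/-- The set of nodes whose bag contains a given vertex has a root-closest element that is
an ancestor of all of them. -/
lemma bagRoot_exists {V : Type u} (hT : T.IsTree) [Fintype 𝒱] (B : 𝒱 → Finset V) (u : V)
    (hne : ∃ x, u ∈ B x) (hconn : (T.induce {x : 𝒱 | u ∈ B x}).Connected) :
    ∃ r : 𝒱, IsBagRoot T root B u r := by
  obtain ⟨r, hr, hmin⟩ := Set.exists_min_image {x : 𝒱 | u ∈ B x} (depth hT root)
    (Set.toFinite _) hne
  refine ⟨r, hr, fun x hx => ?_⟩
  obtain ⟨q, hq, hsub⟩ := exists_path_in_set hconn hr hx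
  clear hq
  -- induct along the walk
  have key : ∀ {a b : 𝒱} (w : T.Walk a b), (∀ y ∈ w.support, y ∈ {x : 𝒱 | u ∈ B x}) →
      Anc T root r a → Anc T root r b := by
    intro a b w
    induction w with
    | nil => exact fun _ h => h
    | @cons a c b hadj w' IH =>
      intro hsup hra
      have hc : c ∈ {x : 𝒱 | u ∈ B x} := hsup c (by simp)
      have hrc : Anc T root r c := by
        rcases adj_anc_or hT hadj with hac | hca
        · exact anc_trans hT hra hac
        · rcases (anc_insert hT hadj.symm hca r).1 hra with rfl | hr'
          · exfalso
            have hlt := depth_lt hT hca hadj.ne.symm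
            exact absurd (hmin c hc) (by omega)
          · exact hr'
      exact IH (fun y hy => hsup y (by simp [hy])) hrc
  exact key q hsub (anc_refl r)

/-- If a connected family of bags contains a node above `m` and a node below `m`,
it contains `m`. -/
lemma mem_of_between {Sset : Set 𝒱} (hT : T.IsTree) (hconn : (T.induce Sset).Connected)
    {r m x : 𝒱} (hr : r ∈ Sset) (hx : x ∈ Sset) (hrm : Anc T root r m)
    (hmx : Anc T root m x) : m ∈ Sset := by
  obtain ⟨q, hq, hsub⟩ := exists_path_in_set hconn hr hx
  exact hsub m (path_through hT hrm hmx q hq)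

end ConnAux
section IterAux

variable {V : Type u}

lemma iter_zero (f : V → Option V) (s : V) : iter f s 0 = some s := rfl

lemma iter_succ (f : V → Option V) (s : V) (n : ℕ) :
    iter f s (n + 1) = (iter f s n).bind f := rfl

lemma iter_one (f : V → Option V) (s : V) : iter f s 1 = f s := by
  rw [iter_succ, iter_zero, Option.bind_some]

lemma iter_elim {f : V → Option V} {s u : V} {n : ℕ} (h : iter f s (n + 1) = some u) :
    ∃ w, iter f s n = some w ∧ f w = some u := by
  rw [iter_succ] at h
  cases hn : iter f s n with
  | none => rw [hn] at h; simp at h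
  | some w => rw [hn, Option.bind_some] at h; exact ⟨w, rfl, h⟩

lemma iter_defined_of_le {f : V → Option V} {s u : V} {m n : ℕ} (hmn : m ≤ n)
    (h : iter f s n = some u) : ∃ w, iter f s m = some w := by
  induction n generalizing u with
  | zero =>
    refine ⟨u, ?_⟩
    rw [Nat.le_zero.1 hmn]
    exact h
  | succ n IH =>
    rcases Nat.lt_or_ge m (n + 1) with hlt | hge
    · obtain ⟨w, hw, -⟩ := iter_elim h
      exact IH (by omega) hw
    · have : m = n + 1 := by omega
      subst this; exact ⟨u, h⟩

/-- The segment lemma: a trace that starts in `A` (resp. `A'`) and stays in `A ∪ A'`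
up to step `N` cannot switch between `A` and `A'`. -/
lemma seg_lemma {f : V → Option V} {A A' : Set V} (hdisj : ∀ u, u ∈ A → u ∈ A' → False)
    (hcross : ∀ u t, f u = some t →
      ((u ∈ A → t ∈ A' → False) ∧ (u ∈ A' → t ∈ A → False)))
    {s t₁ : V} (h1 : f s = some t₁) (N : ℕ)
    (hwin : ∀ n u, 1 ≤ n → n ≤ N → iter f s n = some u → u ∈ A ∪ A') :
    (t₁ ∈ A → ∀ n u, 1 ≤ n → n ≤ N → iter f s n = some u → u ∈ A) ∧
    (t₁ ∈ A' → ∀ n u, 1 ≤ n → n ≤ N → iter f s n = some u → u ∈ A') := by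
  constructor
  · intro ht₁ n
    induction n with
    | zero => intro u h0; omega
    | succ n IH =>
      intro u h1n hN hit
      rcases Nat.eq_zero_or_pos n with rfl | hn
      · rw [iter_one] at hit; rw [h1] at hit; cases hit; exact ht₁
      · obtain ⟨w, hw, hfw⟩ := iter_elim hit
        have hwA : w ∈ A := IH w hn (by omega) hw
        rcases hwin (n + 1) u (by omega) hN hit with hu | hu
        · exact hu
        · exact absurd hu (fun hu => (hcross w u hfw).1 hwA hu)
  · intro ht₁ n
    induction n with
    | zero => intro u h0; omega
    | succ n IH =>
      intro u h1n hN hit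
      rcases Nat.eq_zero_or_pos n with rfl | hn
      · rw [iter_one] at hit; rw [h1] at hit; cases hit; exact ht₁
      · obtain ⟨w, hw, hfw⟩ := iter_elim hit
        have hwA : w ∈ A' := IH w hn (by omega) hw
        rcases hwin (n + 1) u (by omega) hN hit with hu | hu
        · exact absurd hu (fun hu => (hcross w u hfw).2 hwA hu)
        · exact hu

end IterAux

section SettingAux

variable {V : Type u} {𝒱 : Type v} [DecidableEq V] (S : Setting V 𝒱)

lemma psiLe_mono {i j : ℕ} (hij : i ≤ j) : S.psiLe i ⊆ S.psiLe j := by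
  rintro s ⟨k, hk1, hk2, hk⟩
  exact ⟨k, hk1, le_trans hk2 hij, hk⟩

lemma noncrit_psiLe {i : ℕ} (hnc : ¬ S.Crit i) : S.psiLe (i - 1) = S.psiLe i := by
  have hsub : S.psiLe (i - 1) ⊆ S.psiLe i := psiLe_mono S (Nat.sub_le i 1)
  have hcsub : (S.psiLe i)ᶜ ⊆ (S.psiLe (i - 1))ᶜ := Set.compl_subset_compl.2 hsub
  by_contra hne
  exact hnc ⟨hcsub, fun hsup => hne (by
    have : (S.psiLe i)ᶜ = (S.psiLe (i-1))ᶜ := Set.Subset.antisymm hcsub hsup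
    exact (compl_inj_iff.1 this).symm)⟩

lemma selView_congr {i i' : ℕ} {x x' : 𝒱} (hset : S.psiGtAt i x = S.psiGtAt i' x')
    (f : V → Option V) (s : V) (w : View V) :
    S.SelView f i x s w ↔ S.SelView f i' x' s w := by
  cases w <;> simp only [Setting.SelView, hset]

lemma lowestAnc_congr {vs : ℕ → 𝒱} {T : SimpleGraph 𝒱} {root : 𝒱} {i j : ℕ}
    (hth : ThetaLe T root vs i = ThetaLe T root vs j) (w x : 𝒱) :
    LowestAnc T root vs i w x ↔ LowestAnc T root vs j w x := by
  unfold LowestAnc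
  rw [hth]

lemma psiGtAt_congr {i j : ℕ} (hth : ThetaLe S.T S.root S.vs i = ThetaLe S.T S.root S.vs j)
    (hps : S.psiLe (i - 1) = S.psiLe (j - 1)) (x : 𝒱) :
    S.psiGtAt i x = S.psiGtAt j x := by
  show PsiGtAt _ _ _ _ _ _ = PsiGtAt _ _ _ _ _ _
  unfold PsiGtAt
  ext s
  have hps' : PsiLe S.T S.root S.vs S.B (i - 1) = PsiLe S.T S.root S.vs S.B (j - 1) := hps
  simp only [Set.mem_setOf_eq, hps', lowestAnc_congr hth]

lemma viewEq_of_empty {i : ℕ} {x : 𝒱} (hemp : S.psiGtAt i x = ∅)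
    (f g : V → Option V) (s : V) (w : View V) :
    S.SelView f i x s w ↔ S.SelView g i x s w := by
  have hunk : ∀ f' : V → Option V, S.SelView f' i x s View.unk := by
    intro f'
    cases hfs : f' s with
    | none => exact Or.inl ⟨hfs, by rw [hemp]; exact fun hh => hh⟩
    | some t => exact Or.inr ⟨t, hfs, by rw [hemp]; exact fun hh => hh⟩
  have htop : ∀ f' : V → Option V, ¬ ((f' s ≠ none ∨ s ∈ S.psiGtAt i x) ∧
      (∀ (n : ℕ) (t : V), 1 ≤ n → iter f' s n = some t → t ∈ S.psiGtAt i x)) := by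
    rintro f' ⟨hne, hall⟩
    rcases hne with hne | hff
    · obtain ⟨t, ht⟩ := Option.ne_none_iff_exists'.1 hne
      have := hall 1 t le_rfl (by rw [iter_one]; exact ht)
      rw [hemp] at this; exact this
    · rw [hemp] at hff; exact hff
  cases w with
  | unk => exact iff_of_true (hunk f) (hunk g)
  | top =>
    exact iff_of_false (fun hsel => htop f ⟨hsel.1, hsel.2.1⟩)
      (fun hsel => htop g ⟨hsel.1, hsel.2.1⟩)
  | bot =>
    exact iff_of_false (fun hsel => htop f ⟨hsel.1, hsel.2.1⟩)
      (fun hsel => htop g ⟨hsel.1, hsel.2.1⟩)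
  | exit t m =>
    have hex : ∀ f' : V → Option V, ¬ S.SelView f' i x s (View.exit t m) := by
      rintro f' ⟨j, hj2, hitj, -, hwinj, -⟩
      obtain ⟨u, hu⟩ := iter_defined_of_le (show 1 ≤ j by omega) hitj
      have := hwinj 1 u le_rfl (by omega) hu
      rw [hemp] at this; exact this
    exact iff_of_false (hex f) (hex g)

end SettingAux
section DownAux

variable {V : Type u} {𝒱 : Type v} [DecidableEq V] [DecidableEq 𝒱] [Fintype 𝒱]
  (S : Setting V 𝒱) (hT : S.T.IsTree)

lemma mem_theta {i : ℕ} {x : 𝒱} : x ∈ S.theta i ↔ Anc S.T S.root x (S.vs i) := Iff.rfl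

lemma mem_thetaLe {i : ℕ} {x : 𝒱} :
    x ∈ ThetaLe S.T S.root S.vs i ↔ ∃ j, 1 ≤ j ∧ j ≤ i ∧ Anc S.T S.root x (S.vs j) := Iff.rfl

lemma mem_psiLe {i : ℕ} {s : V} :
    s ∈ S.psiLe i ↔ ∃ j, 1 ≤ j ∧ j ≤ i ∧ ∃ x, Anc S.T S.root x (S.vs j) ∧ s ∈ S.B x :=
  Iff.rfl

lemma mem_psiGtAt {i : ℕ} {x : 𝒱} {s : V} :
    s ∈ S.psiGtAt i x ↔ (s ∉ S.psiLe (i - 1) ∧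
      ∃ r, IsBagRoot S.T S.root S.B s r ∧ LowestAnc S.T S.root S.vs i r x) := Iff.rfl

lemma bag_anc_psiLe {i : ℕ} (hi1 : 1 ≤ i) {r : 𝒱} {s : V}
    (hanc : Anc S.T S.root r (S.vs i)) (hs : s ∈ S.B r) : s ∈ S.psiLe i :=
  ⟨i, hi1, le_rfl, r, hanc, hs⟩

lemma bag_thetaLe_psiLe {i : ℕ} {x : 𝒱} {s : V}
    (hx : x ∈ ThetaLe S.T S.root S.vs i) (hs : s ∈ S.B x) : s ∈ S.psiLe i := by
  obtain ⟨j, hj1, hj2, hj⟩ := hx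
  exact ⟨j, hj1, hj2, x, hj, hs⟩

include hT in
lemma isBagRoot_unique {u : V} {r r' : 𝒱} (h1 : IsBagRoot S.T S.root S.B u r)
    (h2 : IsBagRoot S.T S.root S.B u r') : r = r' :=
  anc_antisymm hT (h1.2 r' h2.1) (h2.2 r h1.1)

variable {i : ℕ} (hi1 : 1 ≤ i)
  (hadj : S.T.Adj (S.vs i) (S.vs (i + 1)))
  (hdown : Anc S.T S.root (S.vs i) (S.vs (i + 1)))
  (hfresh : S.vs (i + 1) ∉ ThetaLe S.T S.root S.vs i)

include hT hi1 hadj hdown hfresh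

lemma fresh_not_mem {w : 𝒱} (hw : Anc S.T S.root (S.vs (i + 1)) w) :
    w ∉ ThetaLe S.T S.root S.vs i := by
  rintro ⟨j, hj1, hj2, hj⟩
  exact hfresh ⟨j, hj1, hj2, anc_trans hT hw hj⟩

lemma thetaLe_succ_down :
    ThetaLe S.T S.root S.vs (i + 1) = insert (S.vs (i + 1)) (ThetaLe S.T S.root S.vs i) := by
  ext x
  simp only [mem_thetaLe, Set.mem_insert_iff]
  constructor
  · rintro ⟨j, hj1, hj2, hj⟩
    rcases Nat.lt_or_ge j (i + 1) with hlt | hge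
    · exact Or.inr ⟨j, hj1, by omega, hj⟩
    · have : j = i + 1 := by omega
      subst this
      rcases (anc_insert hT hadj hdown x).1 hj with hx | hx
      · exact Or.inl hx
      · exact Or.inr ⟨i, hi1, le_rfl, hx⟩
  · rintro (rfl | ⟨j, hj1, hj2, hj⟩)
    · exact ⟨i + 1, by omega, le_rfl, anc_refl _⟩
    · exact ⟨j, hj1, by omega, hj⟩

/-- Translation of `LowestAnc` between indices `i` and `i+1` in the fresh-descent case. -/
lemma lowest_down_vi {r : 𝒱} (h : LowestAnc S.T S.root S.vs (i + 1) r (S.vs i)) :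
    LowestAnc S.T S.root S.vs i r (S.vs i) := by
  obtain ⟨h1, h2, h3⟩ := h
  exact ⟨h1, ⟨i, hi1, le_rfl, anc_refl _⟩, fun y hy hy' =>
    h3 y hy (by rw [thetaLe_succ_down S hT hi1 hadj hdown hfresh]; exact Set.mem_insert_of_mem _ hy')⟩

lemma lowest_down_vi1 {r : 𝒱} (h : LowestAnc S.T S.root S.vs (i + 1) r (S.vs (i + 1))) :
    LowestAnc S.T S.root S.vs i r (S.vs i) := by
  obtain ⟨h1, h2, h3⟩ := h
  refine ⟨anc_trans hT hdown h1, ⟨i, hi1, le_rfl, anc_refl _⟩, fun y hy hy' => ?_⟩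
  have hyv : Anc S.T S.root y (S.vs (i + 1)) :=
    h3 y hy (by rw [thetaLe_succ_down S hT hi1 hadj hdown hfresh]; exact Set.mem_insert_of_mem _ hy')
  rcases (anc_insert hT hadj hdown y).1 hyv with rfl | hyy
  · exact absurd hy' hfresh
  · exact hyy

lemma lowest_down_to_succ {r : 𝒱} (h : LowestAnc S.T S.root S.vs i r (S.vs i)) :
    LowestAnc S.T S.root S.vs (i + 1) r (S.vs i) ∨
      LowestAnc S.T S.root S.vs (i + 1) r (S.vs (i + 1)) := by
  obtain ⟨h1, h2, h3⟩ := h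
  by_cases hv : Anc S.T S.root (S.vs (i + 1)) r
  · right
    refine ⟨hv, ⟨i + 1, by omega, le_rfl, anc_refl _⟩, fun y hy hy' => ?_⟩
    rw [thetaLe_succ_down S hT hi1 hadj hdown hfresh] at hy'
    rcases hy' with rfl | hy'
    · exact anc_refl _
    · exact anc_trans hT (h3 y hy hy') hdown
  · left
    refine ⟨h1, ⟨i, hi1, by omega, anc_refl _⟩, fun y hy hy' => ?_⟩
    rw [thetaLe_succ_down S hT hi1 hadj hdown hfresh] at hy'
    rcases hy' with rfl | hy'
    · exact absurd hy hv
    · exact h3 y hy hy'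

lemma psiGtAt_down_union (hps : S.psiLe (i - 1) = S.psiLe i) :
    S.psiGtAt i (S.vs i) = S.psiGtAt (i + 1) (S.vs i) ∪ S.psiGtAt (i + 1) (S.vs (i + 1)) := by
  ext s
  simp only [Set.mem_union, mem_psiGtAt, Nat.add_sub_cancel, hps]
  constructor
  · rintro ⟨hsP, r, hbr, hla⟩
    rcases lowest_down_to_succ S hT hi1 hadj hdown hfresh hla with h | h
    · exact Or.inl ⟨hsP, r, hbr, h⟩
    · exact Or.inr ⟨hsP, r, hbr, h⟩
  · rintro (⟨hsP, r, hbr, hla⟩ | ⟨hsP, r, hbr, hla⟩)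
    · exact ⟨hsP, r, hbr, lowest_down_vi S hT hi1 hadj hdown hfresh hla⟩
    · exact ⟨hsP, r, hbr, lowest_down_vi1 S hT hi1 hadj hdown hfresh hla⟩

lemma psiGtAt_down_disj {s : V} (hA : s ∈ S.psiGtAt (i + 1) (S.vs i))
    (hA' : s ∈ S.psiGtAt (i + 1) (S.vs (i + 1))) : False := by
  obtain ⟨-, r, hbr, hla⟩ := hA
  obtain ⟨-, r', hbr', hla'⟩ := hA'
  obtain rfl := isBagRoot_unique S hT hbr hbr'
  have h1 : Anc S.T S.root (S.vs (i + 1)) (S.vs i) :=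
    hla.2.2 (S.vs (i + 1)) hla'.1 hla'.2.1
  exact hadj.ne (anc_antisymm hT hdown h1)

lemma psiGtAt_down_other (hps : S.psiLe (i - 1) = S.psiLe i) {x : 𝒱}
    (hx : Anc S.T S.root x (S.vs i)) (hne : x ≠ S.vs i) :
    S.psiGtAt i x = S.psiGtAt (i + 1) x := by
  ext s
  simp only [mem_psiGtAt, Nat.add_sub_cancel, hps]
  constructor
  · rintro ⟨hsP, r, hbr, h1, h2, h3⟩
    refine ⟨hsP, r, hbr, h1, ?_, fun y hy hy' => ?_⟩
    · rw [thetaLe_succ_down S hT hi1 hadj hdown hfresh]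
      exact Set.mem_insert_of_mem _ h2
    · rw [thetaLe_succ_down S hT hi1 hadj hdown hfresh] at hy'
      rcases hy' with rfl | hy'
      · -- y = vs (i+1) is an ancestor of r; derive a contradiction
        exfalso
        have hvir : Anc S.T S.root (S.vs i) r := anc_trans hT hdown hy
        have hvx : Anc S.T S.root (S.vs i) x :=
          h3 (S.vs i) hvir ⟨i, hi1, le_rfl, anc_refl _⟩
        exact hne (anc_antisymm hT hx hvx)
      · exact h3 y hy hy'
  · rintro ⟨hsP, r, hbr, h1, h2, h3⟩
    refine ⟨hsP, r, hbr, h1, ?_, fun y hy hy' => ?_⟩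
    · exact ⟨i, hi1, le_rfl, hx⟩
    · refine h3 y hy ?_
      rw [thetaLe_succ_down S hT hi1 hadj hdown hfresh]
      exact Set.mem_insert_of_mem _ hy'

/-- Membership in `A' = Ψ_{>i}(v_{i+1})` for elements of the fresh bag. -/
lemma bag_vi1_mem_A' {s : V} (hs : s ∈ S.B (S.vs (i + 1))) (hsP : s ∉ S.psiLe i)
    (hbagex : ∀ u : V, ∃ x, u ∈ S.B x)
    (hconn : ∀ u : V, (S.T.induce {x : 𝒱 | u ∈ S.B x}).Connected) :
    s ∈ S.psiGtAt (i + 1) (S.vs (i + 1)) := by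
  obtain ⟨r, hbr⟩ := bagRoot_exists hT S.B s (hbagex s) (hconn s)
  have hrv : Anc S.T S.root r (S.vs (i + 1)) := hbr.2 _ hs
  rcases (anc_insert hT hadj hdown r).1 hrv with rfl | hr'
  · refine mem_psiGtAt S |>.2 ⟨by rwa [Nat.add_sub_cancel], _, hbr, anc_refl _,
      ⟨i + 1, by omega, le_rfl, anc_refl _⟩, fun y hy hy' => hy⟩
  · exact absurd (bag_anc_psiLe S hi1 hr' hbr.1) hsP

/-- `A = Ψ_{>i}(v_i)` is disjoint from the fresh bag. -/
lemma bag_vi1_not_A {s : V} (hs : s ∈ S.B (S.vs (i + 1)))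
    (hbagex : ∀ u : V, ∃ x, u ∈ S.B x)
    (hconn : ∀ u : V, (S.T.induce {x : 𝒱 | u ∈ S.B x}).Connected) :
    s ∉ S.psiGtAt (i + 1) (S.vs i) := by
  intro hA
  have hsP : s ∉ S.psiLe i := by
    have := (mem_psiGtAt S).1 hA |>.1
    rwa [Nat.add_sub_cancel] at this
  exact psiGtAt_down_disj S hT hi1 hadj hdown hfresh hA
    (bag_vi1_mem_A' S hT hi1 hadj hdown hfresh hs hsP hbagex hconn)

/-- Separation: if `u` and `t` share a bag and `t ∈ A'`, then `u ∈ A'` or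
`u` belongs to the bag of `v_{i+1}`. -/
lemma separation {u t : V} (hedge : ∃ x, u ∈ S.B x ∧ t ∈ S.B x)
    (ht : t ∈ S.psiGtAt (i + 1) (S.vs (i + 1)))
    (hbagex : ∀ u : V, ∃ x, u ∈ S.B x)
    (hconn : ∀ u : V, (S.T.induce {x : 𝒱 | u ∈ S.B x}).Connected) :
    u ∈ S.psiGtAt (i + 1) (S.vs (i + 1)) ∨ u ∈ S.B (S.vs (i + 1)) := by
  obtain ⟨x, hux, htx⟩ := hedge
  obtain ⟨-, rt, hbrt, hlat⟩ := (mem_psiGtAt S).1 ht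
  have hv1rt : Anc S.T S.root (S.vs (i + 1)) rt := hlat.1
  have hv1x : Anc S.T S.root (S.vs (i + 1)) x := anc_trans hT hv1rt (hbrt.2 x htx)
  obtain ⟨ru, hbru⟩ := bagRoot_exists hT S.B u (hbagex u) (hconn u)
  have hrux : Anc S.T S.root ru x := hbru.2 x hux
  rcases anc_comparable hT hrux hv1x with hruv | hvru
  · -- ru above v_{i+1}: the bag of v_{i+1} contains u
    right
    exact mem_of_between hT (hconn u) hbru.1 hux hruv hv1x
  · -- v_{i+1} above ru : u ∈ A'
    left
    have huP : u ∉ S.psiLe i := by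
      intro huP
      obtain ⟨j, hj1, hj2, y, hy, huy⟩ := (mem_psiLe S).1 huP
      have : Anc S.T S.root (S.vs (i + 1)) y := anc_trans hT hvru (hbru.2 y huy)
      exact fresh_not_mem S hT hi1 hadj hdown hfresh this ⟨j, hj1, hj2, hy⟩
    refine (mem_psiGtAt S).2 ⟨by rwa [Nat.add_sub_cancel], ru, hbru, hvru,
      ⟨i + 1, by omega, le_rfl, anc_refl _⟩, fun y hy hy' => ?_⟩
    rw [thetaLe_succ_down S hT hi1 hadj hdown hfresh] at hy'
    rcases hy' with rfl | hy'
    · exact anc_refl _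
    · rcases anc_comparable hT hy hvru with h | h
      · exact h
      · exact absurd hy' (fresh_not_mem S hT hi1 hadj hdown hfresh h)

end DownAux
section ParentAux

variable {𝒱 : Type v} [DecidableEq 𝒱] {T : SimpleGraph 𝒱} {root : 𝒱}

lemma exists_parent (hT : T.IsTree) {z : 𝒱} (hz : z ≠ root) :
    ∃ w, T.Adj w z ∧ Anc T root w z := by
  obtain ⟨w, hwz, q, hq⟩ :=
    SimpleGraph.Walk.exists_eq_cons_of_ne hz ((thePath hT root z).reverse)
  have hp : thePath hT root z = q.reverse.concat hwz.symm := by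
    have := congrArg SimpleGraph.Walk.reverse hq
    rw [SimpleGraph.Walk.reverse_reverse, SimpleGraph.Walk.reverse_cons] at this
    exact this
  have hanc : Anc T root w z := by
    rcases adj_anc_or hT hwz.symm with h | h
    · exact h
    · exfalso
      have hwm : w ∈ (thePath hT root z).support := by
        rw [hp, SimpleGraph.Walk.support_concat]
        simp [SimpleGraph.Walk.end_mem_support]
      exact hwz.ne (anc_antisymm hT h ((anc_iff hT).2 hwm))
  exact ⟨w, hwz.symm, hanc⟩

end ParentAux

section UpAux

variable {V : Type u} {𝒱 : Type v} [DecidableEq V] [DecidableEq 𝒱] [Fintype 𝒱]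
  (S : Setting V 𝒱) (hT : S.T.IsTree)

variable {i : ℕ} (hdft : IsDFT S.T S.root S.len S.vs) (hi1 : 1 ≤ i) (hilt : i < S.len)
  (hadj : S.T.Adj (S.vs i) (S.vs (i + 1)))
  (hup : Anc S.T S.root (S.vs (i + 1)) (S.vs i))

include hT hdft hi1 hilt hadj hup

lemma up_vi_ne_root : S.vs i ≠ S.root := by
  intro hroot
  rw [hroot] at hup
  have := anc_to_root hT hup
  exact hadj.ne (by rw [hroot, this])

lemma up_claim2 : ∀ k, 1 ≤ k → k ≤ S.len → Anc S.T S.root (S.vs i) (S.vs k) → k ≤ i := by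
  have main : ∀ d k, S.len - k ≤ d → 1 ≤ k → k ≤ S.len →
      Anc S.T S.root (S.vs i) (S.vs k) → k ≤ i := by
    intro d
    induction d with
    | zero =>
      intro k hd h1 hle hanc
      have hk : k = S.len := by omega
      subst hk
      rw [hdft.last] at hanc
      exact absurd (anc_to_root hT hanc) (up_vi_ne_root S hT hdft hi1 hilt hadj hup)
    | succ d IH =>
      intro k hd h1 hle hanc
      rcases eq_or_lt_of_le hle with heq | hlt
      · subst heq
        rw [hdft.last] at hanc
        exact absurd (anc_to_root hT hanc) (up_vi_ne_root S hT hdft hi1 hilt hadj hup)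
      · by_cases hnext : Anc S.T S.root (S.vs i) (S.vs (k + 1))
        · have := IH (k + 1) (by omega) (by omega) (by omega) hnext
          omega
        · have hadjk := hdft.adj k h1 hlt
          rcases adj_anc_or hT hadjk with hc | hc
          · exact absurd (anc_trans hT hanc hc) hnext
          · have hins := anc_insert hT hadjk.symm hc
            rcases (hins (S.vs i)).1 hanc with heqv | hanc'
            · -- vs i = vs k; crossing out of the subtree
              have hadjk' : S.T.Adj (S.vs (k + 1)) (S.vs i) := by
                rw [heqv]; exact hadjk.symm
              have hanck' : Anc S.T S.root (S.vs (k + 1)) (S.vs i) := by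
                rw [heqv]; exact hc
              have hpar : S.vs (k + 1) = S.vs (i + 1) :=
                parent_unique hT hadjk' hanck' hadj.symm hup
              obtain ⟨j0, hj0, huniq⟩ := hdft.once (S.vs i) (S.vs (i + 1)) hadj
              have hk0 : k = j0 := huniq k ⟨h1, hlt, heqv.symm, hpar⟩
              have hi0 : i = j0 := huniq i ⟨hi1, hilt, rfl, rfl⟩
              omega
            · exact absurd hanc' hnext
  intro k h1 hle hanc
  exact main S.len k (by omega) h1 hle hanc

lemma up_covered : ∀ w, Anc S.T S.root (S.vs i) w → w ∈ ThetaLe S.T S.root S.vs i := by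
  intro w hw
  by_cases hweq : w = S.vs i
  · subst hweq
    exact ⟨i, hi1, le_rfl, anc_refl _⟩
  · have hwroot : w ≠ S.root := by
      intro hroot
      rw [hroot] at hw
      exact (up_vi_ne_root S hT hdft hi1 hilt hadj hup) (anc_to_root hT hw)
    obtain ⟨pw, hpadj, hpanc⟩ := exists_parent hT hwroot
    obtain ⟨k, ⟨hk1, hklen, hpk, hwk⟩, -⟩ := hdft.once pw w hpadj
    have h2 : Anc S.T S.root (S.vs i) (S.vs (k + 1)) := by rw [hwk]; exact hw
    have hki := up_claim2 S hT hdft hi1 hilt hadj hup (k + 1) (by omega) (by omega) h2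
    refine ⟨k + 1, by omega, hki, ?_⟩
    show Anc S.T S.root w (S.vs (k + 1))
    rw [hwk]
    exact anc_refl _

lemma psiGtAt_up_empty (hps : S.psiLe (i - 1) = S.psiLe i) :
    S.psiGtAt i (S.vs i) = ∅ := by
  rw [Set.eq_empty_iff_forall_notMem]
  rintro s ⟨hsP, r, hbr, h1, h2, h3⟩
  have hr : r ∈ ThetaLe S.T S.root S.vs i :=
    up_covered S hT hdft hi1 hilt hadj hup r h1
  have hrvi : Anc S.T S.root r (S.vs i) := h3 r (anc_refl _) hr
  have hre : r = S.vs i := anc_antisymm hT hrvi h1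
  have : s ∈ S.psiLe i := bag_anc_psiLe S hi1 (hre ▸ hrvi) hbr.1
  rw [← hps] at this
  exact hsP this

lemma thetaLe_up : ThetaLe S.T S.root S.vs (i + 1) = ThetaLe S.T S.root S.vs i := by
  ext x
  constructor
  · rintro ⟨j, hj1, hj2, hj⟩
    rcases Nat.lt_or_ge j (i + 1) with hlt | hge
    · exact ⟨j, hj1, by omega, hj⟩
    · have : j = i + 1 := by omega
      subst this
      exact ⟨i, hi1, le_rfl, anc_trans hT hj hup⟩
  · rintro ⟨j, hj1, hj2, hj⟩
    exact ⟨j, hj1, by omega, hj⟩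

end UpAux
section TransferAux

variable {V : Type u} {𝒱 : Type v} [DecidableEq V] (S : Setting V 𝒱) {i : ℕ}

lemma down_transfer (f g : V → Option V) (hf : S.Sel Set.univ f) (hg : S.Sel Set.univ g)
    (hvi : S.ViewEq f g (i + 1) (S.vs i))
    (hvi1 : S.ViewEq f g (i + 1) (S.vs (i + 1)))
    (hedge : ∀ u t, S.E u t → ∃ x, u ∈ S.B x ∧ t ∈ S.B x)
    (hR : S.psiGtAt i (S.vs i) =
      S.psiGtAt (i + 1) (S.vs i) ∪ S.psiGtAt (i + 1) (S.vs (i + 1)))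
    (hdisj : ∀ u, u ∈ S.psiGtAt (i + 1) (S.vs i) →
      u ∈ S.psiGtAt (i + 1) (S.vs (i + 1)) → False)
    (hsep : ∀ u t : V, (∃ x, u ∈ S.B x ∧ t ∈ S.B x) →
      t ∈ S.psiGtAt (i + 1) (S.vs (i + 1)) →
      u ∈ S.psiGtAt (i + 1) (S.vs (i + 1)) ∨ u ∈ S.B (S.vs (i + 1)))
    (hsep2 : ∀ u, u ∈ S.B (S.vs (i + 1)) → u ∉ S.psiGtAt (i + 1) (S.vs i))
    (hbase : ∀ u, u ∈ S.B (S.vs i) →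
      u ∉ S.psiGtAt (i + 1) (S.vs i) ∧ u ∉ S.psiGtAt (i + 1) (S.vs (i + 1)))
    (s : V) (hs : s ∈ S.B (S.vs i)) (w : View V)
    (hfw : S.SelView f i (S.vs i) s w) : S.SelView g i (S.vs i) s w := by
  classical
  set A := S.psiGtAt (i + 1) (S.vs i) with hAdef
  set A' := S.psiGtAt (i + 1) (S.vs (i + 1)) with hA'def
  obtain ⟨hsA, hsA'⟩ := hbase s hs
  have hsR : s ∉ S.psiGtAt i (S.vs i) := by
    rw [hR]
    rintro (hh | hh)
    · exact hsA hh
    · exact hsA' hh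
  have hcrossF : ∀ h' : V → Option V, S.Sel Set.univ h' → ∀ u t, h' u = some t →
      ((u ∈ A → t ∈ A' → False) ∧ (u ∈ A' → t ∈ A → False)) := by
    intro h' hsel u t hut
    have he : S.E u t := (hsel u t hut).2
    constructor
    · intro huA htA'
      rcases hsep u t (hedge u t he) htA' with hh | hh
      · exact hdisj u huA hh
      · exact hsep2 u hh huA
    · intro huA' htA
      obtain ⟨x, h1, h2⟩ := hedge u t he
      rcases hsep t u ⟨x, h2, h1⟩ huA' with hh | hh
      · exact hdisj t htA hh
      · exact hsep2 t hh htA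
  have hentry : ∀ h' : V → Option V, S.Sel Set.univ h' → ∀ t, h' s = some t → t ∈ A' →
      s ∈ S.B (S.vs (i + 1)) := by
    intro h' hsel t hst htA'
    rcases hsep s t (hedge s t (hsel s t hst).2) htA' with hh | hh
    · exact absurd hh hsA'
    · exact hh
  cases w with
  | unk =>
    have hfA : S.SelView f (i + 1) (S.vs i) s View.unk := by
      rcases hfw with ⟨hn, -⟩ | ⟨t, hft, htR⟩
      · exact Or.inl ⟨hn, hsA⟩
      · exact Or.inr ⟨t, hft, fun hh => htR (by rw [hR]; exact Or.inl hh)⟩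
    have hgA := (hvi s hs View.unk).1 hfA
    by_cases hs1 : s ∈ S.B (S.vs (i + 1))
    · have hfA' : S.SelView f (i + 1) (S.vs (i + 1)) s View.unk := by
        rcases hfw with ⟨hn, -⟩ | ⟨t, hft, htR⟩
        · exact Or.inl ⟨hn, hsA'⟩
        · exact Or.inr ⟨t, hft, fun hh => htR (by rw [hR]; exact Or.inr hh)⟩
      have hgA' := (hvi1 s hs1 View.unk).1 hfA'
      rcases hgA with ⟨hgn, -⟩ | ⟨t, hgt, htA⟩
      · exact Or.inl ⟨hgn, hsR⟩
      · rcases hgA' with ⟨hgn, -⟩ | ⟨t', hgt', htA'⟩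
        · rw [hgn] at hgt; cases hgt
        · refine Or.inr ⟨t, hgt, ?_⟩
          rw [hR]
          rintro (hh | hh)
          · exact htA hh
          · rw [hgt] at hgt'
            cases hgt'
            exact htA' hh
    · rcases hgA with ⟨hgn, -⟩ | ⟨t, hgt, htA⟩
      · exact Or.inl ⟨hgn, hsR⟩
      · refine Or.inr ⟨t, hgt, ?_⟩
        rw [hR]
        rintro (hh | hh)
        · exact htA hh
        · exact hs1 (hentry g hg t hgt hh)
  | top =>
    obtain ⟨hne, hall, hwin⟩ := hfw
    have hne' : f s ≠ none := by
      rcases hne with hh | hh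
      · exact hh
      · exact absurd hh hsR
    obtain ⟨t₁, h1⟩ := Option.ne_none_iff_exists'.1 hne'
    have ht₁R : t₁ ∈ A ∪ A' := by
      have := hall 1 t₁ le_rfl (by rw [iter_one]; exact h1)
      rwa [hR] at this
    have hwinU : ∀ n u, 1 ≤ n → iter f s n = some u → u ∈ A ∪ A' := by
      intro n u hn1 hit
      have := hall n u hn1 hit
      rwa [hR] at this
    rcases ht₁R with ht₁ | ht₁
    · have hallA : ∀ n u, 1 ≤ n → iter f s n = some u → u ∈ A := by
        intro n u hn1 hit
        exact (seg_lemma hdisj (hcrossF f hf) h1 n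
          (fun m v hm1 hmn hitv => hwinU m v hm1 hitv)).1 ht₁ n u hn1 le_rfl hit
      have hftop : S.SelView f (i + 1) (S.vs i) s View.top :=
        ⟨Or.inl hne', fun n t hn hit => hallA n t hn hit, hwin⟩
      obtain ⟨hgne, hgall, hgwin⟩ := (hvi s hs View.top).1 hftop
      have hgne' : g s ≠ none := by
        rcases hgne with hh | hh
        · exact hh
        · exact absurd hh hsA
      exact ⟨Or.inl hgne',
        fun n t hn hit => by rw [hR]; exact Or.inl (hgall n t hn hit), hgwin⟩
    · have hs1 : s ∈ S.B (S.vs (i + 1)) := hentry f hf t₁ h1 ht₁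
      have hallA' : ∀ n u, 1 ≤ n → iter f s n = some u → u ∈ A' := by
        intro n u hn1 hit
        exact (seg_lemma hdisj (hcrossF f hf) h1 n
          (fun m v hm1 hmn hitv => hwinU m v hm1 hitv)).2 ht₁ n u hn1 le_rfl hit
      have hftop : S.SelView f (i + 1) (S.vs (i + 1)) s View.top :=
        ⟨Or.inl hne', fun n t hn hit => hallA' n t hn hit, hwin⟩
      obtain ⟨hgne, hgall, hgwin⟩ := (hvi1 s hs1 View.top).1 hftop
      have hgne' : g s ≠ none := by
        rcases hgne with hh | hh
        · exact hh
        · exact absurd hh hsA'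
      exact ⟨Or.inl hgne',
        fun n t hn hit => by rw [hR]; exact Or.inr (hgall n t hn hit), hgwin⟩
  | bot =>
    obtain ⟨hne, hall, hwin⟩ := hfw
    have hne' : f s ≠ none := by
      rcases hne with hh | hh
      · exact hh
      · exact absurd hh hsR
    obtain ⟨t₁, h1⟩ := Option.ne_none_iff_exists'.1 hne'
    have ht₁R : t₁ ∈ A ∪ A' := by
      have := hall 1 t₁ le_rfl (by rw [iter_one]; exact h1)
      rwa [hR] at this
    have hwinU : ∀ n u, 1 ≤ n → iter f s n = some u → u ∈ A ∪ A' := by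
      intro n u hn1 hit
      have := hall n u hn1 hit
      rwa [hR] at this
    rcases ht₁R with ht₁ | ht₁
    · have hallA : ∀ n u, 1 ≤ n → iter f s n = some u → u ∈ A := by
        intro n u hn1 hit
        exact (seg_lemma hdisj (hcrossF f hf) h1 n
          (fun m v hm1 hmn hitv => hwinU m v hm1 hitv)).1 ht₁ n u hn1 le_rfl hit
      have hfbot : S.SelView f (i + 1) (S.vs i) s View.bot :=
        ⟨Or.inl hne', fun n t hn hit => hallA n t hn hit, hwin⟩
      obtain ⟨hgne, hgall, hgwin⟩ := (hvi s hs View.bot).1 hfbot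
      have hgne' : g s ≠ none := by
        rcases hgne with hh | hh
        · exact hh
        · exact absurd hh hsA
      exact ⟨Or.inl hgne',
        fun n t hn hit => by rw [hR]; exact Or.inl (hgall n t hn hit), hgwin⟩
    · have hs1 : s ∈ S.B (S.vs (i + 1)) := hentry f hf t₁ h1 ht₁
      have hallA' : ∀ n u, 1 ≤ n → iter f s n = some u → u ∈ A' := by
        intro n u hn1 hit
        exact (seg_lemma hdisj (hcrossF f hf) h1 n
          (fun m v hm1 hmn hitv => hwinU m v hm1 hitv)).2 ht₁ n u hn1 le_rfl hit
      have hfbot : S.SelView f (i + 1) (S.vs (i + 1)) s View.bot :=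
        ⟨Or.inl hne', fun n t hn hit => hallA' n t hn hit, hwin⟩
      obtain ⟨hgne, hgall, hgwin⟩ := (hvi1 s hs1 View.bot).1 hfbot
      have hgne' : g s ≠ none := by
        rcases hgne with hh | hh
        · exact hh
        · exact absurd hh hsA'
      exact ⟨Or.inl hgne',
        fun n t hn hit => by rw [hR]; exact Or.inr (hgall n t hn hit), hgwin⟩
  | exit t m =>
    obtain ⟨j, hj2, hitj, htR, hwinj, hex, hmax⟩ := hfw
    obtain ⟨t₁, h1'⟩ := iter_defined_of_le (show 1 ≤ j by omega) hitj
    have h1 : f s = some t₁ := by rw [← iter_one f s]; exact h1'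
    have ht₁R : t₁ ∈ A ∪ A' := by
      have := hwinj 1 t₁ le_rfl (by omega) h1'
      rwa [hR] at this
    have hwinU : ∀ n u, 1 ≤ n → n ≤ j - 1 → iter f s n = some u → u ∈ A ∪ A' := by
      intro n u hn1 hnj hit
      have := hwinj n u hn1 (by omega) hit
      rwa [hR] at this
    rcases ht₁R with ht₁ | ht₁
    · have hallA := (seg_lemma hdisj (hcrossF f hf) h1 (j - 1) hwinU).1 ht₁
      have hfex : S.SelView f (i + 1) (S.vs i) s (View.exit t m) :=
        ⟨j, hj2, hitj, fun hh => htR (by rw [hR]; exact Or.inl hh),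
          fun n u hn1 hnj hit => hallA n u hn1 (by omega) hit, hex, hmax⟩
      obtain ⟨j', hj'2, hitj', htA, hwinj', hex', hmax'⟩ := (hvi s hs (View.exit t m)).1 hfex
      obtain ⟨u, hu, hgu⟩ := iter_elim
        (show iter g s ((j' - 1) + 1) = some t by rw [show j' - 1 + 1 = j' by omega]; exact hitj')
      have huA : u ∈ A := hwinj' (j' - 1) u (by omega) (by omega) hu
      have htA' : t ∉ A' := fun hh => (hcrossF g hg u t hgu).1 huA hh
      refine ⟨j', hj'2, hitj', ?_, fun n v hn1 hnj hit => ?_, hex', hmax'⟩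
      · rw [hR]
        rintro (hh | hh)
        · exact htA hh
        · exact htA' hh
      · rw [hR]
        exact Or.inl (hwinj' n v hn1 hnj hit)
    · have hs1 : s ∈ S.B (S.vs (i + 1)) := hentry f hf t₁ h1 ht₁
      have hallA' := (seg_lemma hdisj (hcrossF f hf) h1 (j - 1) hwinU).2 ht₁
      have hfex : S.SelView f (i + 1) (S.vs (i + 1)) s (View.exit t m) :=
        ⟨j, hj2, hitj, fun hh => htR (by rw [hR]; exact Or.inr hh),
          fun n u hn1 hnj hit => hallA' n u hn1 (by omega) hit, hex, hmax⟩
      obtain ⟨j', hj'2, hitj', htA', hwinj', hex', hmax'⟩ :=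
        (hvi1 s hs1 (View.exit t m)).1 hfex
      obtain ⟨u, hu, hgu⟩ := iter_elim
        (show iter g s ((j' - 1) + 1) = some t by rw [show j' - 1 + 1 = j' by omega]; exact hitj')
      have huA' : u ∈ A' := hwinj' (j' - 1) u (by omega) (by omega) hu
      have htA : t ∉ A := fun hh => (hcrossF g hg u t hgu).2 huA' hh
      refine ⟨j', hj'2, hitj', ?_, fun n v hn1 hnj hit => ?_, hex', hmax'⟩
      · rw [hR]
        rintro (hh | hh)
        · exact htA hh
        · exact htA' hh
      · rw [hR]
        exact Or.inr (hwinj' n v hn1 hnj hit)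

end TransferAux
/-- For a non-critical index `i ≤ ℓ - 1`, the selector views at
index `i` are determined by the selector views at index `i + 1`. -/
theorem selView_noncritical_determination {V : Type u} {𝒱 : Type v}
    [Fintype V] [DecidableEq V] [Fintype 𝒱]
    (S : Setting V 𝒱) (hS : S.Standing) (hV : 2 ≤ Fintype.card V)
    (i : ℕ) (hi1 : 1 ≤ i) (hi2 : i ≤ S.len - 1) (hnc : ¬ S.Crit i)
    (f g : V → Option V) (hf : S.Sel Set.univ f) (hg : S.Sel Set.univ g)
    (h : ∀ x ∈ S.theta (i + 1), S.ViewEq f g (i + 1) x) :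
    ∀ x ∈ S.theta i, S.ViewEq f g i x := by
  classical
  obtain ⟨hcol, hnice, hdft, hrootbag⟩ := hS
  obtain ⟨⟨hT, hbags, hconn⟩, hleaf, hleafex, hins⟩ := hnice
  have hbagex : ∀ u : V, ∃ x, u ∈ S.B x := by
    intro u
    obtain ⟨x, -, hx⟩ := hleafex u
    exact ⟨x, by rw [hx]; exact Finset.mem_singleton_self u⟩
  have hlen1 : 1 ≤ S.len := hdft.one_le
  have hilt : i < S.len := by omega
  have hadj : S.T.Adj (S.vs i) (S.vs (i + 1)) := hdft.adj i hi1 hilt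
  have hps : S.psiLe (i - 1) = S.psiLe i := noncrit_psiLe S hnc
  have hps' : S.psiLe (i - 1) = S.psiLe (i + 1 - 1) := by
    rw [Nat.add_sub_cancel]; exact hps
  rcases adj_anc_or hT hadj with hdown | hup
  · -- descent case
    by_cases hfresh : S.vs (i + 1) ∈ ThetaLe S.T S.root S.vs i
    · -- the child has been visited before: `ThetaLe` does not change
      have hth : ThetaLe S.T S.root S.vs (i + 1) = ThetaLe S.T S.root S.vs i := by
        ext x
        constructor
        · rintro ⟨j, hj1, hj2', hj⟩
          rcases Nat.lt_or_ge j (i + 1) with hlt | hge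
          · exact ⟨j, hj1, by omega, hj⟩
          · have : j = i + 1 := by omega
            subst this
            rcases (anc_insert hT hadj hdown x).1 hj with rfl | hx
            · exact hfresh
            · exact ⟨i, hi1, le_rfl, hx⟩
        · rintro ⟨j, hj1, hj2', hj⟩
          exact ⟨j, hj1, by omega, hj⟩
      intro x hx s hsx w
      have hxtheta1 : x ∈ S.theta (i + 1) := anc_trans hT hx hdown
      have hpg : S.psiGtAt i x = S.psiGtAt (i + 1) x := psiGtAt_congr S hth.symm hps' x
      rw [selView_congr S hpg f s w, selView_congr S hpg g s w]
      exact h x hxtheta1 s hsx w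
    · -- fresh descent
      have hvimem : S.vs i ∈ S.theta (i + 1) := hdown
      have hvi1mem : S.vs (i + 1) ∈ S.theta (i + 1) := anc_refl _
      have hRe : S.psiGtAt i (S.vs i) =
          S.psiGtAt (i + 1) (S.vs i) ∪ S.psiGtAt (i + 1) (S.vs (i + 1)) :=
        psiGtAt_down_union S hT hi1 hadj hdown hfresh hps
      have hdisj : ∀ u, u ∈ S.psiGtAt (i + 1) (S.vs i) →
          u ∈ S.psiGtAt (i + 1) (S.vs (i + 1)) → False :=
        fun u hA hA' => psiGtAt_down_disj S hT hi1 hadj hdown hfresh hA hA'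
      have hsep : ∀ u t : V, (∃ x, u ∈ S.B x ∧ t ∈ S.B x) →
          t ∈ S.psiGtAt (i + 1) (S.vs (i + 1)) →
          u ∈ S.psiGtAt (i + 1) (S.vs (i + 1)) ∨ u ∈ S.B (S.vs (i + 1)) :=
        fun u t hb ht => separation S hT hi1 hadj hdown hfresh hb ht hbagex hconn
      have hsep2 : ∀ u, u ∈ S.B (S.vs (i + 1)) → u ∉ S.psiGtAt (i + 1) (S.vs i) :=
        fun u hu => bag_vi1_not_A S hT hi1 hadj hdown hfresh hu hbagex hconn
      have hbase : ∀ u, u ∈ S.B (S.vs i) →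
          u ∉ S.psiGtAt (i + 1) (S.vs i) ∧ u ∉ S.psiGtAt (i + 1) (S.vs (i + 1)) := by
        intro u hu
        have huP : u ∈ S.psiLe i := bag_anc_psiLe S hi1 (anc_refl _) hu
        constructor
        · intro hA
          have := (mem_psiGtAt S).1 hA |>.1
          rw [Nat.add_sub_cancel] at this
          exact this huP
        · intro hA'
          have := (mem_psiGtAt S).1 hA' |>.1
          rw [Nat.add_sub_cancel] at this
          exact this huP
      intro x hx
      by_cases hxeq : x = S.vs i
      · subst hxeq
        intro s hsx w
        have hvi : S.ViewEq f g (i + 1) (S.vs i) := h _ hvimem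
        have hvi1 : S.ViewEq f g (i + 1) (S.vs (i + 1)) := h _ hvi1mem
        have hvi' : S.ViewEq g f (i + 1) (S.vs i) := fun s' hs' w' => (hvi s' hs' w').symm
        have hvi1' : S.ViewEq g f (i + 1) (S.vs (i + 1)) := fun s' hs' w' => (hvi1 s' hs' w').symm
        constructor
        · exact down_transfer S f g hf hg hvi hvi1 hbags hRe hdisj hsep hsep2 hbase s hsx w
        · exact down_transfer S g f hg hf hvi' hvi1' hbags hRe hdisj hsep hsep2 hbase s hsx w
      · intro s hsx w
        have hpg := psiGtAt_down_other S hT hi1 hadj hdown hfresh hps hx hxeq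
        rw [selView_congr S hpg f s w, selView_congr S hpg g s w]
        exact h x (anc_trans hT hx hdown) s hsx w
  · -- ascent case
    have hth : ThetaLe S.T S.root S.vs (i + 1) = ThetaLe S.T S.root S.vs i :=
      thetaLe_up S hT hdft hi1 hilt hadj hup
    intro x hx
    rcases (anc_insert hT hadj.symm hup x).1 hx with hxeq | hx1
    · subst hxeq
      intro s hsx w
      exact viewEq_of_empty S (psiGtAt_up_empty S hT hdft hi1 hilt hadj hup hps) f g s w
    · intro s hsx w
      have hpg : S.psiGtAt i x = S.psiGtAt (i + 1) x := psiGtAt_congr S hth.symm hps' x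
      rw [selView_congr S hpg f s w, selView_congr S hpg g s w]
      exact h x hx1 s hsx w
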